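/- Let γ ∈ ℝ and for n ≥ 1 set C_n(λ) = a_{n+N−1}·(X_n(λ) − γ·Id). Let λ ∈ ℝ, let u be a generalised eigenvector associated with λ, and for n ≥ 1 set S_n = a_{n+N−1}²·(u_{n+N−1}·u_n − u_{n+N}·u_{n−1}) and v_n = (u_{n+N−1}, u_{n+N}) ∈ ℝ². Then for every n ≥ 1: (1) S_n = (a_{n+N−1}²/a_{n−1})·⟨E·C_n(λ)·v_n, v_n⟩; (2) |S_{n+N} − S_n| ≤ a_{n+N−1}·‖(a_{n+2N−1}/a_{n+N−1})·C_{n+N}(λ) − (a_{n+N−1}/a_{n−1})·C_n(λ)‖·(u_{n+N−1}² + u_{n+N}²). -/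

import Mathlib

open Matrix
open scoped Matrix Matrix.Norms.L2Operator

/-- The product `C (n₀ + len - 1) * ⋯ * C n₀` of real matrices, larger indices on the left. -/
noncomputable def prodDescN (C : ℕ → Matrix (Fin 2) (Fin 2) ℝ) (n₀ : ℕ) :
    ℕ → Matrix (Fin 2) (Fin 2) ℝ
  | 0 => 1
  | len + 1 => C (n₀ + len) * prodDescN C n₀ len

lemma prodDescN_mulVec_aux (a b : ℕ → ℝ) (ha : ∀ n, 0 < a n) (lam : ℝ) (u : ℕ → ℝ)
    (hu : ∀ n : ℕ, 1 ≤ n → a (n - 1) * u (n - 1) + b n * u n + a n * u (n + 1) = lam * u n)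
    (m : ℕ) : ∀ L : ℕ,
    (prodDescN (fun k => !![0, 1; -(a (k - 1) / a k), (lam - b k) / a k]) (m+1) L).mulVec
      ![u m, u (m+1)] = ![u (m+L), u (m+L+1)] := by
  intro L
  induction L with
  | zero => simp [prodDescN]
  | succ L ih =>
    have h1 : m + 1 + L = (m + L) + 1 := by omega
    have h3 : m + (L + 1) = m + L + 1 := by omega
    rw [prodDescN, ← mulVec_mulVec, ih, h1, h3]
    have hrec := hu (m + L + 1) (by omega)
    simp only [Nat.add_sub_cancel] at hrec
    have hne := (ha (m + L + 1)).ne'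
    funext i
    fin_cases i
    · simp [mulVec, dotProduct, Fin.sum_univ_two]
    · simp only [mulVec, dotProduct, Fin.sum_univ_two, Matrix.cons_val_zero, Matrix.cons_val_one,
        Matrix.head_cons, Matrix.cons_val', Matrix.empty_val', Matrix.cons_val_fin_one,
        Matrix.of_apply, Fin.mk_one, Nat.add_sub_cancel]
      field_simp
      linear_combination -hrec

lemma prodDescN_det_aux (a b : ℕ → ℝ) (ha : ∀ n, 0 < a n) (lam : ℝ) (m : ℕ) : ∀ L : ℕ,
    (prodDescN (fun k => !![0, 1; -(a (k - 1) / a k), (lam - b k) / a k]) (m+1) L).det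
      = a m / a (m + L) := by
  intro L
  induction L with
  | zero => simp [prodDescN, div_self (ha m).ne']
  | succ L ih =>
    have h1 : m + 1 + L = (m + L) + 1 := by omega
    have h3 : m + (L + 1) = m + L + 1 := by omega
    rw [prodDescN, det_mul, ih, h1, h3]
    have h2 : ((!![0, 1; -(a (m+L+1 - 1) / a (m+L+1)), (lam - b (m+L+1)) / a (m+L+1)] :
        Matrix (Fin 2) (Fin 2) ℝ)).det = a (m+L) / a (m+L+1) := by
      simp [Matrix.det_fin_two_of]
    rw [h2, div_mul_div_comm, mul_comm (a (m+L)) (a m),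
      mul_div_mul_right _ _ (ha (m+L)).ne']

lemma quad_aux (P : Matrix (Fin 2) (Fin 2) ℝ) (α γ r s : ℝ) :
    ((!![0, -1; 1, 0] : Matrix (Fin 2) (Fin 2) ℝ) *
        (α • (P - γ • (1 : Matrix (Fin 2) (Fin 2) ℝ)))).mulVec ![r, s] ⬝ᵥ ![r, s]
      = α * ((P 0 0 * r + P 0 1 * s) * s - (P 1 0 * r + P 1 1 * s) * r) := by
  simp [mulVec, dotProduct, Fin.sum_univ_two, Matrix.mul_apply, Matrix.one_apply]
  ring

lemma eform_aux (M : Matrix (Fin 2) (Fin 2) ℝ) (r s : ℝ) :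
    ((!![0, -1; 1, 0] : Matrix (Fin 2) (Fin 2) ℝ) * M).mulVec ![r, s] ⬝ᵥ ![r, s]
      = M.mulVec ![r, s] 0 * s - M.mulVec ![r, s] 1 * r := by
  simp [mulVec, dotProduct, Fin.sum_univ_two, Matrix.mul_apply]
  ring

lemma bd_aux (D : Matrix (Fin 2) (Fin 2) ℝ) (r s : ℝ) :
    |D.mulVec ![r,s] 0 * s - D.mulVec ![r,s] 1 * r| ≤ ‖D‖ * (r^2 + s^2) := by
  set w0 := D.mulVec ![r,s] 0
  set w1 := D.mulVec ![r,s] 1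
  have hx : Real.sqrt (w0^2 + w1^2) ≤ ‖D‖ * Real.sqrt (r^2 + s^2) := by
    have hx := D.l2_opNorm_mulVec ((EuclideanSpace.equiv (Fin 2) ℝ).symm ![r,s])
    simp only [EuclideanSpace.norm_eq, Fin.sum_univ_two, Real.norm_eq_abs, sq_abs] at hx
    convert hx using 3 <;> rfl
  have hD : 0 ≤ ‖D‖ := norm_nonneg _
  have h1 : w0^2 + w1^2 ≤ ‖D‖^2 * (r^2 + s^2) := by
    have := mul_self_le_mul_self (Real.sqrt_nonneg _) hx
    rw [Real.mul_self_sqrt (by positivity)] at this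
    nlinarith [Real.sq_sqrt (show (0:ℝ) ≤ r^2+s^2 by positivity), Real.sqrt_nonneg (r^2+s^2)]
  have h2 : (w0 * s - w1 * r)^2 ≤ (‖D‖ * (r^2+s^2))^2 := by
    nlinarith [sq_nonneg (w0 * r + w1 * s), sq_nonneg (r^2+s^2)]
  rcases abs_cases (w0 * s - w1 * r) with ⟨h,_⟩|⟨h,_⟩ <;>
    nlinarith [mul_nonneg hD (by positivity : (0:ℝ) ≤ r^2+s^2)]

theorem stmt16 (N : ℕ) (hN : 1 ≤ N)
    (a b : ℕ → ℝ) (hapos : ∀ n, 0 < a n)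
    (γ lam : ℝ)
    -- `X n = X_n(λ) = B_{n+N-1}(λ) ⋯ B_n(λ)`
    (X : ℕ → Matrix (Fin 2) (Fin 2) ℝ)
    (hX : ∀ n : ℕ, X n =
      prodDescN (fun k => !![0, 1; -(a (k - 1) / a k), (lam - b k) / a k]) n N)
    -- `C n = C_n(λ) = a_{n+N-1} (X_n(λ) − γ Id)`
    (C : ℕ → Matrix (Fin 2) (Fin 2) ℝ)
    (hC : ∀ n : ℕ, C n = a (n + N - 1) • (X n - γ • (1 : Matrix (Fin 2) (Fin 2) ℝ)))
    -- `u` is a generalised eigenvector associated with `λ`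
    (u : ℕ → ℝ)
    (hu : ∀ n : ℕ, 1 ≤ n → a (n - 1) * u (n - 1) + b n * u n + a n * u (n + 1) = lam * u n)
    (S : ℕ → ℝ)
    (hS : ∀ n : ℕ, S n = a (n + N - 1) ^ 2 * (u (n + N - 1) * u n - u (n + N) * u (n - 1))) :
    ∀ n : ℕ, 1 ≤ n →
      S n = (a (n + N - 1) ^ 2 / a (n - 1)) *
          ((((!![0, -1; 1, 0] : Matrix (Fin 2) (Fin 2) ℝ) * C n).mulVec
              ![u (n + N - 1), u (n + N)]) ⬝ᵥ ![u (n + N - 1), u (n + N)]) ∧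
      |S (n + N) - S n| ≤ a (n + N - 1) *
          ‖(a (n + 2 * N - 1) / a (n + N - 1)) • C (n + N)
            - (a (n + N - 1) / a (n - 1)) • C n‖ *
          (u (n + N - 1) ^ 2 + u (n + N) ^ 2) := by
  intro n hn
  obtain ⟨m, rfl⟩ : ∃ m, n = m + 1 := ⟨n - 1, by omega⟩
  simp only [show m + 1 + N - 1 = m + N from by omega,
    show m + 1 + 2 * N - 1 = m + 2 * N from by omega, Nat.add_sub_cancel]
  simp only [show m + 1 + N = m + N + 1 from by omega]
  -- basic vector/determinant facts
  have hv1 : (X (m+1)).mulVec ![u m, u (m+1)] = ![u (m+N), u (m+N+1)] := by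
    rw [hX]; exact prodDescN_mulVec_aux a b hapos lam u hu m N
  have hv2 : (X (m+N+1)).mulVec ![u (m+N), u (m+N+1)] = ![u (m+2*N), u (m+2*N+1)] := by
    rw [hX]
    have h := prodDescN_mulVec_aux a b hapos lam u hu (m+N) N
    simpa [show m + N + N = m + 2 * N from by omega,
      show m + N + 1 = (m + N) + 1 from rfl] using h
  have e0 : X (m+1) 0 0 * u m + X (m+1) 0 1 * u (m+1) = u (m+N) := by
    have := congrFun hv1 0
    simpa [mulVec, dotProduct, Fin.sum_univ_two] using this
  have e1 : X (m+1) 1 0 * u m + X (m+1) 1 1 * u (m+1) = u (m+N+1) := by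
    have := congrFun hv1 1
    simpa [mulVec, dotProduct, Fin.sum_univ_two] using this
  have f0 : X (m+N+1) 0 0 * u (m+N) + X (m+N+1) 0 1 * u (m+N+1) = u (m+2*N) := by
    have := congrFun hv2 0
    simpa [mulVec, dotProduct, Fin.sum_univ_two] using this
  have f1 : X (m+N+1) 1 0 * u (m+N) + X (m+N+1) 1 1 * u (m+N+1) = u (m+2*N+1) := by
    have := congrFun hv2 1
    simpa [mulVec, dotProduct, Fin.sum_univ_two] using this
  have hdet2 : (X (m+1) 0 0 * X (m+1) 1 1 - X (m+1) 0 1 * X (m+1) 1 0) * a (m+N) = a m := by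
    have h := prodDescN_det_aux a b hapos lam m N
    rw [← hX, Matrix.det_fin_two, eq_div_iff (hapos (m+N)).ne'] at h
    exact h
  -- Part 1
  have hCm : C (m+1) = a (m+N) • (X (m+1) - γ • (1 : Matrix (Fin 2) (Fin 2) ℝ)) := by
    rw [hC]; congr 2; omega
  have hCm' : C (m+N+1) = a (m+2*N) • (X (m+N+1) - γ • (1 : Matrix (Fin 2) (Fin 2) ℝ)) := by
    rw [hC]; congr 2; omega
  have part1 : S (m + 1) = a (m + N) ^ 2 / a m *
      ((!![0, -1; 1, 0] : Matrix (Fin 2) (Fin 2) ℝ) * C (m + 1)).mulVec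
        ![u (m + N), u (m + N + 1)] ⬝ᵥ ![u (m + N), u (m + N + 1)] := by
    rw [hS, hCm, quad_aux]
    simp only [show m + 1 + N - 1 = m + N from by omega,
      show m + 1 + N = m + N + 1 from by omega, Nat.add_sub_cancel]
    rw [← e0, ← e1, div_mul_eq_mul_div, eq_div_iff (hapos m).ne']
    linear_combination -(a (m+N))^2 *
      ((X (m+1) 0 0 * u m + X (m+1) 0 1 * u (m+1)) * u (m+1) -
       (X (m+1) 1 0 * u m + X (m+1) 1 1 * u (m+1)) * u m) * hdet2
  refine ⟨part1, ?_⟩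
  -- Part 2
  have h2a : S (m+N+1) = a (m+2*N) *
      (((!![0, -1; 1, 0] : Matrix (Fin 2) (Fin 2) ℝ) * C (m+N+1)).mulVec
        ![u (m+N), u (m+N+1)] ⬝ᵥ ![u (m+N), u (m+N+1)]) := by
    rw [hS, hCm', quad_aux, f0, f1]
    simp only [show m + N + 1 + N - 1 = m + 2*N from by omega,
      show m + N + 1 + N = m + 2*N + 1 from by omega, Nat.add_sub_cancel]
    ring
  set D : Matrix (Fin 2) (Fin 2) ℝ :=
    (a (m + 2 * N) / a (m + N)) • C (m + N + 1) - (a (m + N) / a m) • C (m + 1) with hD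
  have hw : ∀ i, D.mulVec ![u (m+N), u (m+N+1)] i =
      (a (m + 2 * N) / a (m + N)) * (C (m+N+1)).mulVec ![u (m+N), u (m+N+1)] i -
      (a (m + N) / a m) * (C (m+1)).mulVec ![u (m+N), u (m+N+1)] i := by
    intro i
    rw [hD, Matrix.sub_mulVec]
    simp only [Matrix.smul_mulVec, Pi.sub_apply, Pi.smul_apply, smul_eq_mul]
  have key : S (m+N+1) - S (m+1) = a (m+N) *
      (D.mulVec ![u (m+N), u (m+N+1)] 0 * u (m+N+1) -
       D.mulVec ![u (m+N), u (m+N+1)] 1 * u (m+N)) := by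
    rw [h2a, part1, eform_aux, eform_aux, hw 0, hw 1]
    field_simp [(hapos (m+N)).ne', (hapos m).ne']
    ring
  rw [key, abs_mul, abs_of_pos (hapos (m+N)), mul_assoc]
  exact mul_le_mul_of_nonneg_left (bd_aux D (u (m+N)) (u (m+N+1))) (hapos (m+N)).le
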